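/- The intersection graph of any chord diagram is semisymmetric: for every vertex v labeled {i,i} and any other vertex w, there is an (uncancelled mod 2) directed edge from v to w if and only if there is an (uncancelled mod 2) directed edge from w to v. -/
import Mathlib


/-- A chord diagram of degree `n` on `k` oriented strands: each chord `a : Fin n` has two
endpoints (`s : Fin 2`), each lying on a component `comp a s` at a position `pos a s`
along that component; all endpoints are distinct. -/
structure ChordDiagram (k n : ℕ) where
  comp : Fin n → Fin 2 → Fin k
  pos : Fin n → Fin 2 → ℕ
  distinct : ∀ (a b : Fin n) (s t : Fin 2),
    comp a s = comp b t → pos a s = pos b t → a = b ∧ s = t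

/-- The number of directed edges from chord `a` to chord `b` in the intersection graph
(before any mod-2 cancellation): one for each pair of endpoints of `a` and `b` lying on
the same component with the endpoint of `a` first. -/
def edgesFrom {k n : ℕ} (D : ChordDiagram k n) (a b : Fin n) : ℕ :=
  (Finset.univ.filter (fun st : Fin 2 × Fin 2 =>
    D.comp a st.1 = D.comp b st.2 ∧ D.pos a st.1 < D.pos b st.2)).card

/-- The intersection graph of a chord diagram is semisymmetric: for an unmarked chord
`v` (label `{i,i}`) and any other chord `w`, there is an uncancelled (mod 2) directed
edge from `v` to `w` iff there is one from `w` to `v`. -/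
theorem intersection_graph_semisymmetric {k n : ℕ} (D : ChordDiagram k n)
    (v w : Fin n) (hunmarked : D.comp v 0 = D.comp v 1) (hvw : v ≠ w) :
    (Odd (edgesFrom D v w) ↔ Odd (edgesFrom D w v)) := by
  classical
  have hcomp : ∀ s : Fin 2, D.comp v s = D.comp v 0 := by
    intro s; fin_cases s <;> simp [hunmarked]
  set S : Finset (Fin 2 × Fin 2) :=
    Finset.univ.filter (fun st : Fin 2 × Fin 2 => D.comp v st.1 = D.comp w st.2) with hS
  have hne : ∀ p ∈ S, D.pos v p.1 ≠ D.pos w p.2 := by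
    intro p hp heq
    have hc : D.comp v p.1 = D.comp w p.2 := by
      simpa [hS] using hp
    exact hvw (D.distinct v w p.1 p.2 hc heq).1
  -- edgesFrom v w as a filter of S
  have h1 : edgesFrom D v w =
      (S.filter (fun p => D.pos v p.1 < D.pos w p.2)).card := by
    rw [hS, Finset.filter_filter]
    rfl
  -- edgesFrom w v as a filter of S, via swapping the pair
  have h2 : edgesFrom D w v =
      (S.filter (fun p => D.pos w p.2 < D.pos v p.1)).card := by
    unfold edgesFrom
    apply Finset.card_equiv (Equiv.prodComm (Fin 2) (Fin 2))
    intro p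
    simp only [Finset.mem_filter, Finset.mem_univ, true_and, hS,
      Equiv.prodComm_apply, Prod.fst_swap, Prod.snd_swap]
    constructor
    · rintro ⟨h, h'⟩; exact ⟨h.symm, h'⟩
    · rintro ⟨h, h'⟩; exact ⟨h.symm, h'⟩
  have hsum : edgesFrom D v w + edgesFrom D w v = S.card := by
    rw [h1, h2]
    have : S.filter (fun p => D.pos w p.2 < D.pos v p.1) =
        S.filter (fun p => ¬ D.pos v p.1 < D.pos w p.2) := by
      apply Finset.filter_congr
      intro p hp
      have := hne p hp
      simp only [not_lt]
      constructor
      · exact le_of_lt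
      · intro h; exact lt_of_le_of_ne h (fun e => this e.symm)
    rw [this, Finset.card_filter_add_card_filter_not]
  -- S = univ ×ˢ T, so its cardinality is even
  have hScard : Even S.card := by
    have : S = (Finset.univ : Finset (Fin 2)) ×ˢ
        (Finset.univ.filter (fun t : Fin 2 => D.comp v 0 = D.comp w t)) := by
      ext p
      simp [hS, Finset.mem_product, hcomp p.1]
    rw [this, Finset.card_product]
    simp [Finset.card_univ]
  have heven : Even (edgesFrom D v w + edgesFrom D w v) := hsum ▸ hScard
  rw [Nat.even_add] at heven
  rw [Nat.not_even_iff_odd.symm, Nat.not_even_iff_odd.symm]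
  exact not_congr heven
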